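/- For the hexagonal-lattice diffusion interconnection matrix M := (M_0 ⊗ I_{N_0}) + (I_{N_0} ⊗ M_0) + P_F^T(M_0 ⊗ I_{N_0})P_F, where M_0 is the N_0×N_0 circulant second-differences matrix (first row (-2,1,0,...,0,1)) and P_F = diag(P^0, ..., P^{N_0-1}) with P the cyclic shift, the eigenvalues are [Λ]_{mn} = -6 + 2(cos(2πm/N_0) + cos(2πn/N_0) + cos(2π(m-n)/N_0)) for m, n ∈ {0,...,N_0-1}, with eigenvectors w_m ⊗ w_n where (w_k)_j = e^{2πijk/N_0}. -/

import Mathlib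

open Matrix Kronecker

namespace Stmt12Aux

open scoped Fin.NatCast Fin.CommRing

noncomputable def E (N0 : ℕ) (x : ℤ) : ℂ := Complex.exp (2 * Real.pi * Complex.I * x / N0)

lemma E_add (N0 : ℕ) [NeZero N0] (x y : ℤ) : E N0 (x + y) = E N0 x * E N0 y := by
  have hne : (N0 : ℂ) ≠ 0 := Nat.cast_ne_zero.mpr (NeZero.ne N0)
  rw [E, E, E, ← Complex.exp_add]
  congr 1
  field_simp
  push_cast
  ring

lemma E_int_mul (N0 : ℕ) [NeZero N0] (k : ℤ) : E N0 ((N0 : ℤ) * k) = 1 := by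
  have hne : (N0 : ℂ) ≠ 0 := Nat.cast_ne_zero.mpr (NeZero.ne N0)
  rw [E]
  have h : 2 * (Real.pi : ℂ) * Complex.I * ((N0 : ℤ) * k : ℤ) / N0
      = (k : ℂ) * (2 * Real.pi * Complex.I) := by
    field_simp
    push_cast
    ring
  rw [h, Complex.exp_int_mul_two_pi_mul_I]

lemma E_congr (N0 : ℕ) [NeZero N0] {x y : ℤ} (h : (N0 : ℤ) ∣ x - y) : E N0 x = E N0 y := by
  obtain ⟨k, hk⟩ := h
  have hx : x = y + (N0 : ℤ) * k := by linarith
  subst hx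
  rw [E_add, E_int_mul, mul_one]

lemma E_cos (N0 : ℕ) [NeZero N0] (x : ℤ) :
    E N0 x + E N0 (-x) = 2 * (Real.cos (2 * Real.pi * x / N0) : ℂ) := by
  have hne : (N0 : ℂ) ≠ 0 := Nat.cast_ne_zero.mpr (NeZero.ne N0)
  have hc : ((Real.cos (2 * Real.pi * x / N0) : ℝ) : ℂ)
      = Complex.cos (((2 * Real.pi * x / N0 : ℝ)) : ℂ) := Complex.ofReal_cos _
  rw [E, E, hc, Complex.cos]
  have h1 : 2 * (Real.pi:ℂ) * Complex.I * ((x:ℤ):ℂ) / N0 = ((2*Real.pi*x/N0 : ℝ) : ℂ) * Complex.I := by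
    push_cast; ring
  have h2 : 2 * (Real.pi:ℂ) * Complex.I * ((-x : ℤ):ℂ) / N0 = -(((2*Real.pi*x/N0 : ℝ) : ℂ) * Complex.I) := by
    push_cast; ring
  rw [h1, h2]
  ring


-- distinctness in Fin N0, N0 ≥ 3
lemma fin_two_ne (N0 : ℕ) [NeZero N0] (hN : 3 ≤ N0) : (2 : Fin N0) ≠ 0 := by
  have h : ((2 : Fin N0) : ℕ) = 2 % N0 := by
    rw [show (2 : Fin N0) = ((2 : ℕ) : Fin N0) by norm_cast, Fin.val_natCast]
  have h2 : (2 : ℕ) % N0 = 2 := Nat.mod_eq_of_lt (by omega)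
  intro hc
  rw [Fin.ext_iff, h, h2] at hc
  simp at hc

lemma fin_one_ne (N0 : ℕ) [NeZero N0] (hN : 3 ≤ N0) : (1 : Fin N0) ≠ 0 := by
  have h : ((1 : Fin N0) : ℕ) = 1 % N0 := Fin.val_one' N0
  have h2 : (1 : ℕ) % N0 = 1 := Nat.mod_eq_of_lt (by omega)
  intro hc
  rw [Fin.ext_iff, h, h2] at hc
  simp at hc

lemma add_one_ne (N0 : ℕ) [NeZero N0] (hN : 3 ≤ N0) (a : Fin N0) : a + 1 ≠ a := by
  intro hc
  exact fin_one_ne N0 hN (by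
    have := hc
    nth_rewrite 2 [show a = a + 0 by rw [add_zero]] at this
    exact add_left_cancel this)

lemma sub_one_ne (N0 : ℕ) [NeZero N0] (hN : 3 ≤ N0) (a : Fin N0) : a - 1 ≠ a := by
  intro hc
  have : a - 1 + 1 = a + 1 := by rw [hc]
  rw [sub_add_cancel] at this
  exact add_one_ne N0 hN a this.symm

lemma add_ne_sub (N0 : ℕ) [NeZero N0] (hN : 3 ≤ N0) (a : Fin N0) : a + 1 ≠ a - 1 := by
  intro hc
  have : a + 1 + 1 = a - 1 + 1 := by rw [hc]
  rw [sub_add_cancel] at this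
  have h2 : a + 2 = a + 0 := by rw [add_zero]; rw [show a + 2 = a + 1 + 1 by ring]; exact this
  exact fin_two_ne N0 hN (add_left_cancel h2)


lemma Ppow (N0 : ℕ) [NeZero N0] (P : Matrix (Fin N0) (Fin N0) ℂ)
    (hP : ∀ i j : Fin N0, P i j = if i = j + 1 then 1 else 0) (c : ℕ) (i j : Fin N0) :
    (P ^ c) i j = if i = j + (c : Fin N0) then 1 else 0 := by
  induction c generalizing i j with
  | zero => simp [Matrix.one_apply]
  | succ c ih =>
    rw [pow_succ, Matrix.mul_apply]
    have h : ∀ t : Fin N0, (P ^ c) i t * P t j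
        = if t = j + 1 then (if i = j + 1 + (c : Fin N0) then 1 else 0) else 0 := by
      intro t
      rw [ih, hP]
      by_cases ht : t = j + 1
      · subst ht; simp
      · simp [ht]
    rw [Finset.sum_congr rfl (fun t _ => h t), Finset.sum_ite_eq']
    simp only [Finset.mem_univ, if_true]
    have h2 : ((c + 1 : ℕ) : Fin N0) = (c : Fin N0) + 1 := by push_cast; ring
    rw [h2]
    congr 1
    rw [eq_iff_iff]
    constructor <;> intro h' <;> rw [h'] <;> ring

lemma sum_M0 (N0 : ℕ) [NeZero N0] (hN : 3 ≤ N0) (M0 : Matrix (Fin N0) (Fin N0) ℂ)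
    (hM0 : ∀ i j : Fin N0, M0 i j =
      if i = j then -2 else if j = i + 1 ∨ i = j + 1 then 1 else 0)
    (a : Fin N0) (g : Fin N0 → ℂ) :
    ∑ l, M0 a l * g l = -2 * g a + g (a + 1) + g (a - 1) := by
  have h1 : a + 1 ≠ a := add_one_ne N0 hN a
  have h2 : a - 1 ≠ a := sub_one_ne N0 hN a
  have h3 : a + 1 ≠ a - 1 := add_ne_sub N0 hN a
  have key : ∀ l : Fin N0, M0 a l * g l =
      (if l = a then -2 * g a else 0) + (if l = a + 1 then g (a + 1) else 0) +
      (if l = a - 1 then g (a - 1) else 0) := by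
    intro l
    rw [hM0]
    by_cases e1 : l = a
    · subst e1
      rw [if_pos rfl, if_pos rfl, if_neg (Ne.symm h1), if_neg (Ne.symm h2)]
      ring
    · by_cases e2 : l = a + 1
      · subst e2
        rw [if_neg (Ne.symm h1), if_pos (Or.inl rfl), if_neg h1, if_pos rfl, if_neg h3]
        ring
      · by_cases e3 : l = a - 1
        · subst e3
          have hsa : a - 1 + 1 = a := sub_add_cancel a 1
          rw [if_neg (Ne.symm h2), if_pos (Or.inr hsa.symm), if_neg h2,
            if_neg (Ne.symm h3), if_pos rfl]
          ring
        · have hc : ¬ (a = l + 1) := by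
            intro h
            exact e3 (by rw [h, add_sub_cancel_right])
          rw [if_neg (fun h => e1 h.symm), if_neg (by push_neg; exact ⟨e2, hc⟩),
            if_neg e1, if_neg e2, if_neg e3]
          ring
  rw [Finset.sum_congr rfl (fun l _ => key l)]
  rw [Finset.sum_add_distrib, Finset.sum_add_distrib]
  simp [Finset.sum_ite_eq']


lemma E_fin_add (N0 : ℕ) [NeZero N0] (a t : Fin N0) (c : ℕ) :
    E N0 ((((a + t : Fin N0) : ℕ) : ℤ) * c) = E N0 (((a : ℕ) : ℤ) * c) * E N0 (((t : ℕ) : ℤ) * c) := by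
  rw [← E_add]
  apply E_congr
  have hval : ((a + t : Fin N0) : ℕ) = ((a : ℕ) + (t : ℕ)) % N0 := Fin.val_add a t
  rw [hval]
  have hd : (N0 : ℤ) ∣ ((((a : ℕ) + (t : ℕ)) % N0 : ℕ) : ℤ) - (((a : ℕ) : ℤ) + (t : ℕ)) := by
    refine ⟨-((((a : ℕ) : ℤ) + (t : ℕ)) / N0), ?_⟩
    push_cast
    rw [Int.emod_def]
    ring
  have hkey : ((((a : ℕ) + (t : ℕ)) % N0 : ℕ) : ℤ) * c - ((((a : ℕ) : ℤ)) * c + (((t : ℕ) : ℤ)) * c)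
      = (((((a : ℕ) + (t : ℕ)) % N0 : ℕ) : ℤ) - (((a : ℕ) : ℤ) + (t : ℕ))) * c := by ring
  rw [hkey]
  exact hd.mul_right c

-- mulVec helpers
lemma kron_one_mulVec (N0 : ℕ) [NeZero N0] (A : Matrix (Fin N0) (Fin N0) ℂ)
    (v : Fin N0 × Fin N0 → ℂ) (a b : Fin N0) :
    (A ⊗ₖ (1 : Matrix (Fin N0) (Fin N0) ℂ)).mulVec v (a, b) = ∑ l, A a l * v (l, b) := by
  rw [Matrix.mulVec, dotProduct, Fintype.sum_prod_type]
  refine Finset.sum_congr rfl (fun l _ => ?_)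
  rw [Finset.sum_congr rfl (fun j _ => show (A ⊗ₖ (1 : Matrix (Fin N0) (Fin N0) ℂ)) (a, b) (l, j) * v (l, j)
      = if j = b then A a l * v (l, b) else 0 from by
    rw [kroneckerMap_apply, Matrix.one_apply]
    by_cases hj : j = b
    · subst hj; simp
    · simp [hj, Ne.symm hj])]
  rw [Finset.sum_ite_eq' Finset.univ b (fun _ => A a l * v (l, b))]
  simp

lemma one_kron_mulVec (N0 : ℕ) [NeZero N0] (A : Matrix (Fin N0) (Fin N0) ℂ)
    (v : Fin N0 × Fin N0 → ℂ) (a b : Fin N0) :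
    ((1 : Matrix (Fin N0) (Fin N0) ℂ) ⊗ₖ A).mulVec v (a, b) = ∑ j, A b j * v (a, j) := by
  rw [Matrix.mulVec, dotProduct, Fintype.sum_prod_type]
  rw [Finset.sum_congr rfl (fun l (_ : l ∈ Finset.univ) => show
      ∑ j, ((1 : Matrix (Fin N0) (Fin N0) ℂ) ⊗ₖ A) (a, b) (l, j) * v (l, j)
      = if l = a then ∑ j, A b j * v (a, j) else 0 from by
    by_cases hl : l = a
    · subst hl
      rw [if_pos rfl]
      refine Finset.sum_congr rfl (fun j _ => ?_)
      rw [kroneckerMap_apply, Matrix.one_apply, if_pos rfl, one_mul]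
    · rw [if_neg hl]
      refine Finset.sum_eq_zero (fun j _ => ?_)
      rw [kroneckerMap_apply, Matrix.one_apply, if_neg (Ne.symm hl), zero_mul, zero_mul])]
  rw [Finset.sum_ite_eq' Finset.univ a (fun _ => ∑ j, A b j * v (a, j))]
  simp


lemma PF_mulVec (N0 : ℕ) [NeZero N0]
    (P : Matrix (Fin N0) (Fin N0) ℂ) (PF : Matrix (Fin N0 × Fin N0) (Fin N0 × Fin N0) ℂ)
    (hP : ∀ i j : Fin N0, P i j = if i = j + 1 then 1 else 0)
    (hPF : ∀ k i l j : Fin N0, PF (k, i) (l, j) = if k = l then (P ^ (k : ℕ)) i j else 0)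
    (v : Fin N0 × Fin N0 → ℂ) (k i : Fin N0) :
    PF.mulVec v (k, i) = v (k, i - k) := by
  rw [Matrix.mulVec, dotProduct, Fintype.sum_prod_type]
  rw [Finset.sum_congr rfl (fun l (_ : l ∈ Finset.univ) => show
      ∑ j, PF (k, i) (l, j) * v (l, j) = if l = k then v (k, i - k) else 0 from by
    by_cases hl : l = k
    · subst hl
      rw [if_pos rfl]
      rw [Finset.sum_congr rfl (fun j (_ : j ∈ Finset.univ) => show
          PF (l, i) (l, j) * v (l, j) = if j = i - l then v (l, i - l) else 0 from by
        rw [hPF, if_pos rfl, Ppow N0 P hP]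
        by_cases hj : j = i - l
        · subst hj
          rw [if_pos rfl, if_pos (by rw [Fin.cast_val_eq_self, sub_add_cancel]), one_mul]
        · rw [if_neg hj, if_neg (by
            rw [Fin.cast_val_eq_self]
            intro hc
            exact hj (by rw [hc, add_sub_cancel_right])), zero_mul])]
      rw [Finset.sum_ite_eq' Finset.univ (i - l) (fun _ => v (l, i - l))]
      simp
    · rw [if_neg hl]
      refine Finset.sum_eq_zero (fun j _ => ?_)
      rw [hPF, if_neg (Ne.symm hl), zero_mul])]
  rw [Finset.sum_ite_eq' Finset.univ k (fun _ => v (k, i - k))]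
  simp

lemma PFT_mulVec (N0 : ℕ) [NeZero N0]
    (P : Matrix (Fin N0) (Fin N0) ℂ) (PF : Matrix (Fin N0 × Fin N0) (Fin N0 × Fin N0) ℂ)
    (hP : ∀ i j : Fin N0, P i j = if i = j + 1 then 1 else 0)
    (hPF : ∀ k i l j : Fin N0, PF (k, i) (l, j) = if k = l then (P ^ (k : ℕ)) i j else 0)
    (w : Fin N0 × Fin N0 → ℂ) (a b : Fin N0) :
    PFᵀ.mulVec w (a, b) = w (a, b + a) := by
  rw [Matrix.mulVec, dotProduct, Fintype.sum_prod_type]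
  rw [Finset.sum_congr rfl (fun k (_ : k ∈ Finset.univ) => show
      ∑ i, PFᵀ (a, b) (k, i) * w (k, i) = if k = a then w (a, b + a) else 0 from by
    by_cases hk : k = a
    · subst hk
      rw [if_pos rfl]
      rw [Finset.sum_congr rfl (fun i (_ : i ∈ Finset.univ) => show
          PFᵀ (k, b) (k, i) * w (k, i) = if i = b + k then w (k, b + k) else 0 from by
        rw [Matrix.transpose_apply, hPF, if_pos rfl, Ppow N0 P hP, Fin.cast_val_eq_self]
        by_cases hi : i = b + k
        · subst hi; rw [if_pos rfl, if_pos rfl, one_mul]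
        · rw [if_neg hi, if_neg hi, zero_mul])]
      rw [Finset.sum_ite_eq' Finset.univ (b + k) (fun _ => w (k, b + k))]
      simp
    · rw [if_neg hk]
      refine Finset.sum_eq_zero (fun i _ => ?_)
      rw [Matrix.transpose_apply, hPF, if_neg hk, zero_mul])]
  rw [Finset.sum_ite_eq' Finset.univ a (fun _ => w (a, b + a))]
  simp


end Stmt12Aux

open Stmt12Aux in
theorem stmt12 (N0 : ℕ) [NeZero N0] (hN : 3 ≤ N0)
    (M0 P : Matrix (Fin N0) (Fin N0) ℂ)
    (PF : Matrix (Fin N0 × Fin N0) (Fin N0 × Fin N0) ℂ)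
    (hM0 : ∀ i j : Fin N0, M0 i j =
      if i = j then -2 else if j = i + 1 ∨ i = j + 1 then 1 else 0)
    (hP : ∀ i j : Fin N0, P i j = if i = j + 1 then 1 else 0)
    (hPF : ∀ k i l j : Fin N0, PF (k, i) (l, j) = if k = l then (P ^ (k : ℕ)) i j else 0)
    (m n : Fin N0) :
    (M0 ⊗ₖ (1 : Matrix (Fin N0) (Fin N0) ℂ) + (1 : Matrix (Fin N0) (Fin N0) ℂ) ⊗ₖ M0 +
        PFᵀ * (M0 ⊗ₖ (1 : Matrix (Fin N0) (Fin N0) ℂ)) * PF).mulVec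
      (fun p : Fin N0 × Fin N0 =>
        Complex.exp (2 * Real.pi * Complex.I * (p.1 : ℕ) * (m : ℕ) / N0) *
        Complex.exp (2 * Real.pi * Complex.I * (p.2 : ℕ) * (n : ℕ) / N0)) =
    (((-6 + 2 * (Real.cos (2 * Real.pi * (m : ℕ) / N0) +
        Real.cos (2 * Real.pi * (n : ℕ) / N0) +
        Real.cos (2 * Real.pi * (((m : ℕ) : ℝ) - ((n : ℕ) : ℝ)) / N0)) : ℝ)) : ℂ) •
      (fun p : Fin N0 × Fin N0 =>
        Complex.exp (2 * Real.pi * Complex.I * (p.1 : ℕ) * (m : ℕ) / N0) *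
        Complex.exp (2 * Real.pi * Complex.I * (p.2 : ℕ) * (n : ℕ) / N0)) := by
  have hone : ((1 : Fin N0) : ℕ) = 1 := by
    rw [Fin.val_one']; exact Nat.mod_eq_of_lt (by omega)
  have hunit : ∀ x : ℤ, E N0 x * E N0 (-x) = 1 := by
    intro x
    rw [← E_add, add_neg_cancel]
    simp [E]
  have hshift : ∀ (x : Fin N0) (c : ℕ),
      E N0 ((((x + 1 : Fin N0) : ℕ) : ℤ) * c) = E N0 (((x : ℕ) : ℤ) * c) * E N0 (c : ℤ) := by
    intro x c
    have h := E_fin_add N0 x 1 c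
    rwa [hone, Nat.cast_one, one_mul] at h
  have hshift' : ∀ (x : Fin N0) (c : ℕ),
      E N0 ((((x - 1 : Fin N0) : ℕ) : ℤ) * c) * E N0 (c : ℤ) = E N0 (((x : ℕ) : ℤ) * c) := by
    intro x c
    have h := hshift (x - 1) c
    rw [sub_add_cancel] at h
    exact h.symm
  have hshiftm : ∀ (x : Fin N0) (c : ℕ),
      E N0 ((((x - 1 : Fin N0) : ℕ) : ℤ) * c) = E N0 (((x : ℕ) : ℤ) * c) * E N0 (-(c : ℤ)) := by
    intro x c
    calc E N0 ((((x - 1 : Fin N0) : ℕ) : ℤ) * c)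
        = E N0 ((((x - 1 : Fin N0) : ℕ) : ℤ) * c) * (E N0 (c : ℤ) * E N0 (-(c : ℤ))) := by
          rw [hunit (c : ℤ), mul_one]
      _ = (E N0 ((((x - 1 : Fin N0) : ℕ) : ℤ) * c) * E N0 (c : ℤ)) * E N0 (-(c : ℤ)) := by ring
      _ = E N0 (((x : ℕ) : ℤ) * c) * E N0 (-(c : ℤ)) := by rw [hshift']
  have hfun : (fun p : Fin N0 × Fin N0 =>
        Complex.exp (2 * Real.pi * Complex.I * (p.1 : ℕ) * (m : ℕ) / N0) *
        Complex.exp (2 * Real.pi * Complex.I * (p.2 : ℕ) * (n : ℕ) / N0)) =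
      (fun p : Fin N0 × Fin N0 =>
        E N0 (((p.1 : ℕ) : ℤ) * ((m : ℕ) : ℤ)) * E N0 (((p.2 : ℕ) : ℤ) * ((n : ℕ) : ℤ))) := by
    funext p
    simp only [E]
    congr 2
    · push_cast; ring
    · push_cast; ring
  rw [hfun]
  -- coefficient
  have hmn : E N0 (((m : ℕ) : ℤ) - ((n : ℕ) : ℤ)) = E N0 ((m : ℕ) : ℤ) * E N0 (-((n : ℕ) : ℤ)) := by
    rw [sub_eq_add_neg, E_add]
  have hnm : E N0 (-(((m : ℕ) : ℤ) - ((n : ℕ) : ℤ))) = E N0 (-((m : ℕ) : ℤ)) * E N0 ((n : ℕ) : ℤ) := by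
    rw [neg_sub, sub_eq_add_neg, E_add, mul_comm]
  have c1 := E_cos N0 ((m : ℕ) : ℤ)
  have c2 := E_cos N0 ((n : ℕ) : ℤ)
  have c3 := E_cos N0 (((m : ℕ) : ℤ) - ((n : ℕ) : ℤ))
  rw [hmn, hnm] at c3
  push_cast at c1 c2 c3
  have hcoeff : (((-6 + 2 * (Real.cos (2 * Real.pi * (m : ℕ) / N0) +
        Real.cos (2 * Real.pi * (n : ℕ) / N0) +
        Real.cos (2 * Real.pi * (((m : ℕ) : ℝ) - ((n : ℕ) : ℝ)) / N0)) : ℝ)) : ℂ) =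
      -6 + (E N0 ((m : ℕ) : ℤ) + E N0 (-((m : ℕ) : ℤ)))
        + (E N0 ((n : ℕ) : ℤ) + E N0 (-((n : ℕ) : ℤ)))
        + (E N0 ((m : ℕ) : ℤ) * E N0 (-((n : ℕ) : ℤ)) + E N0 (-((m : ℕ) : ℤ)) * E N0 ((n : ℕ) : ℤ)) := by
    push_cast
    linear_combination -c1 - c2 - c3
  rw [hcoeff]
  funext p
  obtain ⟨a, b⟩ := p
  rw [Matrix.add_mulVec, Matrix.add_mulVec, Pi.add_apply, Pi.add_apply,
    Pi.smul_apply, smul_eq_mul]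
  have hterm3 : (PFᵀ * (M0 ⊗ₖ (1 : Matrix (Fin N0) (Fin N0) ℂ)) * PF).mulVec
      (fun p : Fin N0 × Fin N0 =>
        E N0 (((p.1 : ℕ) : ℤ) * ((m : ℕ) : ℤ)) * E N0 (((p.2 : ℕ) : ℤ) * ((n : ℕ) : ℤ))) (a, b)
      = ∑ l, M0 a l * (E N0 (((l : ℕ) : ℤ) * ((m : ℕ) : ℤ)) *
          E N0 ((((b + a - l : Fin N0) : ℕ) : ℤ) * ((n : ℕ) : ℤ))) := by
    rw [← Matrix.mulVec_mulVec, ← Matrix.mulVec_mulVec]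
    rw [PFT_mulVec N0 P PF hP hPF]
    rw [kron_one_mulVec]
    refine Finset.sum_congr rfl (fun l _ => ?_)
    rw [PF_mulVec N0 P PF hP hPF]
  rw [hterm3, kron_one_mulVec, one_kron_mulVec]
  rw [sum_M0 N0 hN M0 hM0 a, sum_M0 N0 hN M0 hM0 b, sum_M0 N0 hN M0 hM0 a]
  have e1 : b + a - a = b := by abel
  have e2 : b + a - (a + 1) = b - 1 := by abel
  have e3 : b + a - (a - 1) = b + 1 := by abel
  simp only [e1, e2, e3]
  rw [hshift a (m : ℕ), hshift b (n : ℕ), hshiftm a (m : ℕ), hshiftm b (n : ℕ)]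
  ring
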